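/- arXiv:2407.21121 — 2 statements merged into one kernel-verified Lean document; each statement's English description precedes it below -/
import Mathlib

section
/- For every real number $a$ and every real $x$, $\sin(a \sin x) = \sum_{k \in \mathbb{Z}, k \text{ odd}} J_k(a) \sin(k x)$, equivalently $\sin(a\sin x) = 2\sum_{k=0}^{\infty} J_{2k+1}(a)\sin((2k+1)x)$, where $J_k$ denotes the Bessel function of the first kind of order $k$. -/
/-- Bessel function of the first kind of nonnegative integer order. -/
noncomputable def besselJ (k : ℕ) (a : ℝ) : ℝ :=
  ∑' m : ℕ, ((-1 : ℝ) ^ m / (m.factorial * (m + k).factorial)) * (a / 2) ^ (2 * m + k)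

/-- Bessel function of the first kind of integer order, with `J_{-k} = (-1)^k J_k`. -/
noncomputable def besselJInt (k : ℤ) (a : ℝ) : ℝ :=
  if 0 ≤ k then besselJ k.toNat a else (-1) ^ (-k).toNat * besselJ (-k).toNat a

lemma besselJ_summable (k : ℕ) (a : ℝ) :
    Summable (fun m : ℕ => ((-1 : ℝ) ^ m / (m.factorial * (m + k).factorial)) * (a / 2) ^ (2 * m + k)) := by
  apply Summable.of_norm_bounded (g := fun m : ℕ => (|a| / 2) ^ k * (((a / 2) ^ 2) ^ m / m.factorial))
  · exact (Real.summable_pow_div_factorial ((a / 2) ^ 2)).mul_left _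
  · intro m
    have h1 : ‖((-1 : ℝ) ^ m / (m.factorial * (m + k).factorial)) * (a / 2) ^ (2 * m + k)‖
        = |a / 2| ^ (2 * m + k) / ((m.factorial : ℝ) * (m + k).factorial) := by
      rw [Real.norm_eq_abs, abs_mul, abs_div, abs_pow, abs_pow, abs_neg, abs_one, one_pow,
        abs_of_nonneg (by positivity : (0:ℝ) ≤ (m.factorial : ℝ) * (m + k).factorial)]
      ring
    rw [h1]
    calc |a / 2| ^ (2 * m + k) / ((m.factorial : ℝ) * (m + k).factorial)
        ≤ |a / 2| ^ (2 * m + k) / (m.factorial : ℝ) := by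
          apply div_le_div_of_nonneg_left (by positivity) (by positivity)
          have h2 : (1:ℝ) ≤ (m+k).factorial := Nat.one_le_cast.mpr (Nat.factorial_pos (m+k))
          have h3 : (0:ℝ) < m.factorial := Nat.cast_pos.mpr (Nat.factorial_pos m)
          nlinarith
      _ = (|a| / 2) ^ k * (((a / 2) ^ 2) ^ m / m.factorial) := by
          rw [pow_add, pow_mul, sq_abs, abs_div]
          simp [abs_two]
          ring

set_option maxHeartbeats 1000000 in
open Complex in
lemma besselJ_hasSumC (k : ℕ) (a : ℝ) :
    HasSum (fun m : ℕ => ((((-1 : ℝ) ^ m / (m.factorial * (m + k).factorial)) * (a / 2) ^ (2 * m + k) : ℝ) : ℂ))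
      ((besselJ k a : ℂ)) :=
  hasSum_ofReal.mpr (by rw [besselJ]; exact (besselJ_summable k a).hasSum)

set_option maxHeartbeats 1000000 in
open Complex in
lemma fiber_core_pos (a x : ℝ) (k : ℕ) :
    HasSum (fun m : ℕ => (((a / 2 : ℝ) : ℂ) * Complex.exp ((x : ℂ) * I)) ^ (m + k) / (m + k).factorial *
        ((-((a / 2 : ℝ) : ℂ) * Complex.exp (-(x : ℂ) * I)) ^ m / m.factorial))
      ((besselJ k a : ℂ) * Complex.exp ((k : ℂ) * x * I)) := by
  refine ((besselJ_hasSumC k a).mul_right (Complex.exp ((k : ℂ) * x * I))).congr_fun fun m => ?_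
  have hm : ((m.factorial : ℂ)) ≠ 0 := Nat.cast_ne_zero.mpr m.factorial_ne_zero
  have hmk : (((m + k).factorial : ℂ)) ≠ 0 := Nat.cast_ne_zero.mpr (m + k).factorial_ne_zero
  have hnum : (((a / 2 : ℝ) : ℂ) * Complex.exp ((x : ℂ) * I)) ^ (m + k) *
      (-((a / 2 : ℝ) : ℂ) * Complex.exp (-(x : ℂ) * I)) ^ m
      = (-1) ^ m * ((a / 2 : ℝ) : ℂ) ^ (2 * m + k) * Complex.exp ((k : ℂ) * x * I) := by
    rw [mul_pow, mul_pow, neg_pow, ← Complex.exp_nat_mul, ← Complex.exp_nat_mul]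
    have h : Complex.exp ((m + k : ℕ) * ((x : ℂ) * I)) * Complex.exp ((m : ℕ) * (-(x : ℂ) * I))
        = Complex.exp ((k : ℂ) * x * I) := by
      rw [← Complex.exp_add]; congr 1; push_cast; ring
    calc ((a / 2 : ℝ) : ℂ) ^ (m + k) * Complex.exp ((m + k : ℕ) * ((x : ℂ) * I)) *
          ((-1) ^ m * ((a / 2 : ℝ) : ℂ) ^ m * Complex.exp ((m : ℕ) * (-(x : ℂ) * I)))
        = (-1) ^ m * ((a / 2 : ℝ) : ℂ) ^ (2 * m + k) *
          (Complex.exp ((m + k : ℕ) * ((x : ℂ) * I)) * Complex.exp ((m : ℕ) * (-(x : ℂ) * I))) := by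
          ring
      _ = _ := by rw [h]
  rw [div_mul_div_comm, hnum]
  push_cast
  field_simp

set_option maxHeartbeats 1000000 in
open Complex in
lemma fiber_core_neg (a x : ℝ) (k : ℕ) :
    HasSum (fun m : ℕ => (((a / 2 : ℝ) : ℂ) * Complex.exp ((x : ℂ) * I)) ^ m / m.factorial *
        ((-((a / 2 : ℝ) : ℂ) * Complex.exp (-(x : ℂ) * I)) ^ (m + k) / (m + k).factorial))
      ((-1 : ℂ) ^ k * (besselJ k a : ℂ) * Complex.exp ((-(k : ℂ)) * x * I)) := by
  have h0 := (((besselJ_hasSumC k a).mul_right (Complex.exp ((-(k : ℂ)) * x * I))).mul_left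
    ((-1 : ℂ) ^ k))
  rw [← mul_assoc] at h0
  refine h0.congr_fun fun m => ?_
  have hm : ((m.factorial : ℂ)) ≠ 0 := Nat.cast_ne_zero.mpr m.factorial_ne_zero
  have hmk : (((m + k).factorial : ℂ)) ≠ 0 := Nat.cast_ne_zero.mpr (m + k).factorial_ne_zero
  have hnum : (((a / 2 : ℝ) : ℂ) * Complex.exp ((x : ℂ) * I)) ^ m *
      (-((a / 2 : ℝ) : ℂ) * Complex.exp (-(x : ℂ) * I)) ^ (m + k)
      = (-1) ^ (m + k) * ((a / 2 : ℝ) : ℂ) ^ (2 * m + k) * Complex.exp ((-(k : ℂ)) * x * I) := by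
    rw [mul_pow, mul_pow, neg_pow, ← Complex.exp_nat_mul, ← Complex.exp_nat_mul]
    have h : Complex.exp ((m : ℕ) * ((x : ℂ) * I)) * Complex.exp ((m + k : ℕ) * (-(x : ℂ) * I))
        = Complex.exp ((-(k : ℂ)) * x * I) := by
      rw [← Complex.exp_add]; congr 1; push_cast; ring
    calc ((a / 2 : ℝ) : ℂ) ^ m * Complex.exp ((m : ℕ) * ((x : ℂ) * I)) *
          ((-1) ^ (m + k) * ((a / 2 : ℝ) : ℂ) ^ (m + k) * Complex.exp ((m + k : ℕ) * (-(x : ℂ) * I)))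
        = (-1) ^ (m + k) * ((a / 2 : ℝ) : ℂ) ^ (2 * m + k) *
          (Complex.exp ((m : ℕ) * ((x : ℂ) * I)) * Complex.exp ((m + k : ℕ) * (-(x : ℂ) * I))) := by
          ring
      _ = _ := by rw [h]
  rw [div_mul_div_comm, hnum]
  push_cast
  rw [pow_add]
  field_simp

set_option maxHeartbeats 1000000 in
open Complex in
lemma besselJInt_hasSum_exp (a x : ℝ) :
    HasSum (fun n : ℤ => (besselJInt n a : ℂ) * Complex.exp ((n : ℂ) * x * I))
      (Complex.exp (((a * Real.sin x : ℝ) : ℂ) * I)) := by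
  set z : ℂ := ((a / 2 : ℝ) : ℂ) * Complex.exp ((x : ℂ) * I) with hzdef
  set w : ℂ := -((a / 2 : ℝ) : ℂ) * Complex.exp (-(x : ℂ) * I) with hwdef
  have h1 : HasSum (fun p : ℕ => z ^ p / p.factorial) (Complex.exp z) := by
    rw [Complex.exp_eq_exp_ℂ]; exact NormedSpace.expSeries_div_hasSum_exp z
  have h2 : HasSum (fun q : ℕ => w ^ q / q.factorial) (Complex.exp w) := by
    rw [Complex.exp_eq_exp_ℂ]; exact NormedSpace.expSeries_div_hasSum_exp w
  have hsn : ∀ u : ℂ, Summable (fun p : ℕ => ‖u ^ p / (p.factorial : ℂ)‖) := by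
    intro u
    simpa [norm_div, norm_pow, Complex.norm_natCast] using Real.summable_pow_div_factorial ‖u‖
  have hprod : HasSum (fun pq : ℕ × ℕ => z ^ pq.1 / pq.1.factorial * (w ^ pq.2 / pq.2.factorial))
      (Complex.exp z * Complex.exp w) := by
    apply HasSum.mul h1 h2 (((hsn z).mul_norm (hsn w)).of_norm)
  have hexp : Complex.exp z * Complex.exp w = Complex.exp (((a * Real.sin x : ℝ) : ℂ) * I) := by
    rw [← Complex.exp_add]
    congr 1
    rw [hzdef, hwdef, Complex.ofReal_mul, Complex.ofReal_sin, Complex.sin]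
    push_cast
    simp only [neg_mul, neg_neg]
    linear_combination (↑a * (Complex.exp ((x:ℂ) * I) - Complex.exp (-((x:ℂ) * I))) / 2) *
      Complex.I_mul_I
  -- regroup the double sum along diagonals
  have hbij : Function.Bijective
      (fun s : (Σ _ : ℤ, ℕ) => ((s.2 + s.1.toNat, s.2 + (-s.1).toNat) : ℕ × ℕ)) := by
    constructor
    · rintro ⟨n, m⟩ ⟨n', m'⟩ h
      simp only [Prod.mk.injEq] at h
      obtain ⟨h1, h2⟩ := h
      obtain ⟨rfl, rfl⟩ : n = n' ∧ m = m' := by omega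
      rfl
    · rintro ⟨p, q⟩
      refine ⟨⟨(p : ℤ) - q, min p q⟩, ?_⟩
      simp only [Prod.mk.injEq]
      omega
  have hsig : HasSum (fun s : (Σ _ : ℤ, ℕ) =>
      z ^ (s.2 + s.1.toNat) / (s.2 + s.1.toNat).factorial *
        (w ^ (s.2 + (-s.1).toNat) / (s.2 + (-s.1).toNat).factorial))
      (Complex.exp z * Complex.exp w) :=
    (Equiv.ofBijective _ hbij).hasSum_iff.mpr hprod
  rw [hexp] at hsig
  refine hsig.sigma fun n => ?_
  rcases le_or_gt 0 n with hn | hn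
  · obtain ⟨k, rfl⟩ := Int.eq_ofNat_of_zero_le hn
    have ht1 : ((k : ℤ)).toNat = k := Int.toNat_natCast k
    have ht2 : (-(k : ℤ)).toNat = 0 := by omega
    simp only [ht1, ht2, Nat.add_zero]
    have hJ : besselJInt (k : ℤ) a = besselJ k a := by
      rw [besselJInt, if_pos (by positivity), ht1]
    rw [hJ]
    have hcast : ((k : ℤ) : ℂ) = (k : ℂ) := by push_cast; ring
    rw [hcast]
    exact fiber_core_pos a x k
  · obtain ⟨k, rfl⟩ : ∃ k : ℕ, n = -(k : ℤ) := ⟨(-n).toNat, by omega⟩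
    have ht1 : (-(k : ℤ)).toNat = 0 := by omega
    have ht2 : (-(-(k : ℤ))).toNat = k := by omega
    simp only [ht1, ht2, Nat.add_zero]
    have hJ : besselJInt (-(k : ℤ)) a = (-1) ^ k * besselJ k a := by
      rw [besselJInt, if_neg (by omega), ht2]
    rw [hJ]
    have hcast : ((-(k : ℤ) : ℤ) : ℂ) = -(k : ℂ) := by push_cast; ring
    rw [hcast]
    have := fiber_core_neg a x k
    convert this using 2
    push_cast
    ring

open Complex in
lemma besselJInt_neg (n : ℤ) (a : ℝ) : besselJInt (-n) a = (-1) ^ n.natAbs * besselJInt n a := by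
  rcases lt_trichotomy n 0 with h | rfl | h
  · rw [besselJInt, besselJInt, if_pos (by omega : (0:ℤ) ≤ -n), if_neg (by omega : ¬ (0:ℤ) ≤ n)]
    have h2 : n.natAbs = (-n).toNat := by omega
    rw [h2, ← mul_assoc, ← pow_add, Even.neg_one_pow ⟨(-n).toNat, by ring⟩, one_mul]
  · norm_num [besselJInt]
  · rw [besselJInt, besselJInt, if_neg (by omega : ¬ (0:ℤ) ≤ -n), if_pos (by omega : (0:ℤ) ≤ n),
      neg_neg]
    have h2 : n.natAbs = n.toNat := by omega
    rw [h2]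

open Complex in
private lemma sin_a_sin_expansion_aux (a x : ℝ) :
    HasSum (fun k : ℤ => if Odd k then besselJInt k a * Real.sin ((k : ℝ) * x) else 0)
      (Real.sin (a * Real.sin x)) ∧
    HasSum (fun k : ℕ => 2 * besselJ (2 * k + 1) a * Real.sin ((2 * k + 1 : ℝ) * x))
      (Real.sin (a * Real.sin x)) := by
  have hZ := besselJInt_hasSum_exp a x
  have hZ := besselJInt_hasSum_exp a x
  have hIm := Complex.imCLM.hasSum hZ
  simp only [Complex.imCLM_apply] at hIm
  rw [Complex.exp_ofReal_mul_I_im] at hIm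
  have him : ∀ n : ℤ, ((besselJInt n a : ℂ) * Complex.exp ((n : ℂ) * x * I)).im
      = besselJInt n a * Real.sin ((n : ℝ) * x) := by
    intro n
    have h : ((n : ℂ) * x * I) = ((((n : ℝ) * x : ℝ)) : ℂ) * I := by push_cast; ring
    rw [h, Complex.im_ofReal_mul, Complex.exp_ofReal_mul_I_im]
  have hf : HasSum (fun n : ℤ => besselJInt n a * Real.sin ((n : ℝ) * x))
      (Real.sin (a * Real.sin x)) := hIm.congr_fun fun n => (him n).symm
  -- `f (-n)` in terms of `f n`
  have hf_neg : ∀ n : ℤ, besselJInt (-n) a * Real.sin (((-n : ℤ) : ℝ) * x)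
      = if Odd n then besselJInt n a * Real.sin ((n : ℝ) * x)
        else -(besselJInt n a * Real.sin ((n : ℝ) * x)) := by
    intro n
    rw [besselJInt_neg]
    push_cast
    rw [neg_mul, Real.sin_neg]
    by_cases hodd : Odd n
    · rw [if_pos hodd, Odd.neg_one_pow (Int.natAbs_odd.mpr hodd)]
      ring
    · rw [if_neg hodd, Even.neg_one_pow (Int.natAbs_even.mpr (Int.not_odd_iff_even.mp hodd))]
      ring
  have hfneg : HasSum (fun n : ℤ => besselJInt (-n) a * Real.sin (((-n : ℤ) : ℝ) * x))
      (Real.sin (a * Real.sin x)) := by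
    have h := (Equiv.neg ℤ).hasSum_iff.mpr hf
    exact h.congr_fun fun n => rfl
  have hg : HasSum (fun k : ℤ => if Odd k then besselJInt k a * Real.sin ((k : ℝ) * x) else 0)
      (Real.sin (a * Real.sin x)) := by
    have h12 := (hf.add hfneg).div_const 2
    rw [add_self_div_two] at h12
    refine h12.congr_fun fun n => ?_
    rw [hf_neg n]
    by_cases hodd : Odd n
    · rw [if_pos hodd, if_pos hodd]; ring
    · rw [if_neg hodd, if_neg hodd]; ring
  refine ⟨hg, ?_⟩
  have hgeven : ∀ m : ℤ,
      (if Odd (-m) then besselJInt (-m) a * Real.sin (((-m : ℤ) : ℝ) * x) else 0)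
      = if Odd m then besselJInt m a * Real.sin ((m : ℝ) * x) else 0 := by
    intro m
    by_cases hodd : Odd m
    · rw [if_pos hodd, if_pos (odd_neg.mpr hodd), hf_neg m, if_pos hodd]
    · rw [if_neg hodd, if_neg (fun hc => hodd (odd_neg.mp hc))]
  have h2 := hg.nat_add_neg
  have hg0 : (if Odd (0 : ℤ) then besselJInt 0 a * Real.sin (((0 : ℤ) : ℝ) * x) else 0) = 0 := by
    norm_num [Int.odd_iff]
  rw [hg0, add_zero] at h2
  have h2' : HasSum (fun n : ℕ =>
      2 * (if Odd ((n : ℤ)) then besselJInt n a * Real.sin (((n : ℤ) : ℝ) * x) else 0))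
      (Real.sin (a * Real.sin x)) := by
    refine h2.congr_fun fun n => ?_
    rw [hgeven]
    ring
  have hinj : Function.Injective (fun k : ℕ => 2 * k + 1) := fun p q h => by
    simp only at h; omega
  have hvan : ∀ n : ℕ, n ∉ Set.range (fun k : ℕ => 2 * k + 1) →
      2 * (if Odd ((n : ℤ)) then besselJInt n a * Real.sin (((n : ℤ) : ℝ) * x) else 0) = 0 := by
    intro n hn
    have hne : ¬ Odd ((n : ℤ)) := by
      intro hodd
      obtain ⟨m, hm⟩ := hodd
      simp only [Set.mem_range, not_exists] at hn
      exact hn m.toNat (by omega)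
    rw [if_neg hne, mul_zero]
  have h3 := (hinj.hasSum_iff hvan).mpr h2'
  refine h3.congr_fun fun k => ?_
  have hodd : Odd (((2 * k + 1 : ℕ) : ℤ)) := ⟨(k : ℤ), by push_cast; ring⟩
  simp only [Function.comp_apply]
  rw [if_pos hodd]
  have hJ : besselJInt ((2 * k + 1 : ℕ) : ℤ) a = besselJ (2 * k + 1) a := by
    rw [besselJInt, if_pos (by positivity), Int.toNat_natCast]
  rw [hJ]
  push_cast
  ring

theorem sin_a_sin_expansion (a x : ℝ) :
    HasSum (fun k : ℤ => if Odd k then besselJInt k a * Real.sin ((k : ℝ) * x) else 0)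
      (Real.sin (a * Real.sin x)) ∧
    HasSum (fun k : ℕ => 2 * besselJ (2 * k + 1) a * Real.sin ((2 * k + 1 : ℝ) * x))
      (Real.sin (a * Real.sin x)) :=
  sin_a_sin_expansion_aux a x
end

section
/- For every real number $a$ and every real $x$, $\cos(a \sin x) = J_0(a) + 2\sum_{k=1}^{\infty} J_{2k}(a)\cos(2kx)$, where $J_k$ denotes the Bessel function of the first kind of order $k$. -/
/-- Auxiliary bijection between `ℤ × ℕ` and `ℕ × ℕ`, fibering pairs `(p, q)` over `p - q`. -/
def natPairEquiv : ℤ × ℕ ≃ ℕ × ℕ where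
  toFun p := if 0 ≤ p.1 then (p.2 + p.1.toNat, p.2) else (p.2, p.2 + (-p.1).toNat)
  invFun q := ((q.1 : ℤ) - q.2, min q.1 q.2)
  left_inv := by
    rintro ⟨d, m⟩
    by_cases h : 0 ≤ d <;> simp only [h, if_true, if_false, Prod.mk.injEq] <;>
      constructor <;> omega
  right_inv := by
    rintro ⟨p, q⟩
    by_cases h : q ≤ p <;>
      [simp only [if_pos (by omega : (0:ℤ) ≤ (p:ℤ) - q)];
       simp only [if_neg (by omega : ¬ (0:ℤ) ≤ (p:ℤ) - q)]] <;>
      simp only [Prod.mk.injEq] <;> constructor <;> omega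

lemma aux_re (r t : ℝ) : (((r : ℂ)) * Complex.exp ((t : ℂ) * Complex.I)).re
    = r * Real.cos t := by
  rw [Complex.re_ofReal_mul, Complex.exp_ofReal_mul_I_re]

open Complex in
theorem cos_a_sin_expansion (a x : ℝ) :
    HasSum (fun k : ℕ => 2 * besselJ (2 * (k + 1)) a * Real.cos ((2 * (k + 1) : ℝ) * x))
      (Real.cos (a * Real.sin x) - besselJ 0 a) := by
  obtain ⟨z, hz⟩ : ∃ z : ℂ, z = ((a : ℂ)/2) * Complex.exp ((x : ℂ) * I) := ⟨_, rfl⟩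
  obtain ⟨w, hw⟩ : ∃ w : ℂ, w = -((a : ℂ)/2) * Complex.exp (-(x : ℂ) * I) := ⟨_, rfl⟩
  -- summability of the norms of the exponential series
  have hnorm : ∀ u : ℂ, Summable fun n : ℕ => ‖u ^ n / (n.factorial : ℂ)‖ := by
    intro u
    have : (fun n : ℕ => ‖u ^ n / (n.factorial : ℂ)‖)
        = fun n : ℕ => ‖u‖ ^ n / (n.factorial : ℝ) := by
      funext n
      rw [norm_div, norm_pow]
      norm_num
    rw [this]
    exact Real.summable_pow_div_factorial _
  have hF : HasSum (fun n : ℕ => z ^ n / (n.factorial : ℂ)) (Complex.exp z) := by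
    rw [Complex.exp_eq_exp_ℂ]
    exact NormedSpace.expSeries_div_hasSum_exp z
  have hG : HasSum (fun n : ℕ => w ^ n / (n.factorial : ℂ)) (Complex.exp w) := by
    rw [Complex.exp_eq_exp_ℂ]
    exact NormedSpace.expSeries_div_hasSum_exp w
  have hsmm := summable_mul_of_summable_norm (R := ℂ) (hnorm z) (hnorm w)
  have hmul := HasSum.mul (α := ℂ) hF hG hsmm
  have hzw : z + w = ((a * Real.sin x : ℝ) : ℂ) * I := by
    rw [hz, hw]
    push_cast
    rw [Complex.sin]
    linear_combination (a/2 * (Complex.exp (x*I) - Complex.exp (-x*I))) * Complex.I_sq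
  rw [← Complex.exp_add, hzw] at hmul
  -- the real-parts series
  obtain ⟨g, hgdef⟩ : ∃ g : ℕ × ℕ → ℝ, g = fun pq =>
      ((-1 : ℝ) ^ pq.2 * (a/2) ^ (pq.1 + pq.2) / (pq.1.factorial * pq.2.factorial)) *
        Real.cos (((pq.1 : ℝ) - pq.2) * x) := ⟨_, rfl⟩
  have hterm : ∀ pq : ℕ × ℕ,
      ((z ^ pq.1 / (pq.1.factorial : ℂ)) * (w ^ pq.2 / (pq.2.factorial : ℂ))).re = g pq := by
    rintro ⟨p, q⟩
    have h1 : z ^ p * w ^ q =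
        ((((-1 : ℝ) ^ q * (a/2) ^ (p + q) : ℝ)) : ℂ) *
          Complex.exp (((((p : ℝ) - q) * x : ℝ)) * I) := by
      rw [hz, hw, mul_pow, mul_pow, neg_pow, ← Complex.exp_nat_mul, ← Complex.exp_nat_mul,
        mul_mul_mul_comm, ← Complex.exp_add,
        show (p:ℂ) * ((x:ℂ) * I) + (q:ℂ) * (-(x:ℂ) * I)
          = ((((p : ℝ) - q) * x : ℝ) : ℂ) * I by push_cast; ring]
      push_cast
      ring
    have h2 : (z ^ p / (p.factorial : ℂ)) * (w ^ q / (q.factorial : ℂ))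
        = ((((-1 : ℝ) ^ q * (a/2) ^ (p + q) / (p.factorial * q.factorial) : ℝ)) : ℂ) *
          Complex.exp (((((p : ℝ) - q) * x : ℝ)) * I) := by
      rw [div_mul_div_comm, h1]
      push_cast
      ring
    rw [h2, aux_re]
    simp only [hgdef]
  have hg : HasSum g (Real.cos (a * Real.sin x)) := by
    have := Complex.hasSum_re hmul
    simp only [hterm, Complex.exp_ofReal_mul_I_re] at this
    exact this
  -- reindex along the fibration `(p, q) ↦ p - q`
  have hφ : HasSum (g ∘ natPairEquiv) (Real.cos (a * Real.sin x)) :=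
    (natPairEquiv.hasSum_iff).2 hg
  obtain ⟨c, hcdef⟩ : ∃ c : ℤ → ℝ, c = fun d : ℤ => besselJInt d a * Real.cos ((d : ℝ) * x) :=
    ⟨_, rfl⟩
  have hc : ∀ d : ℤ, HasSum (fun m : ℕ => (g ∘ natPairEquiv) (d, m)) (c d) := by
    intro d
    have hs : Summable (fun m : ℕ => (g ∘ natPairEquiv) (d, m)) :=
      hφ.summable.prod_factor d
    have h := hs.hasSum
    convert h using 1
    by_cases hd : 0 ≤ d
    · have hdr : ((d.toNat : ℕ) : ℝ) = (d : ℝ) := by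
        exact_mod_cast congrArg (Int.cast : ℤ → ℝ) (Int.toNat_of_nonneg hd)
      have he : ∀ m : ℕ, (g ∘ natPairEquiv) (d, m) =
          (((-1 : ℝ) ^ m / (m.factorial * (m + d.toNat).factorial)) *
            (a/2) ^ (2 * m + d.toNat)) * Real.cos ((d : ℝ) * x) := by
        intro m
        simp only [Function.comp, natPairEquiv, Equiv.coe_fn_mk, if_pos hd, hgdef]
        rw [show (((m + d.toNat : ℕ) : ℝ) - (m : ℝ)) * x = (d : ℝ) * x by
          push_cast [hdr]; ring]
        ring
      rw [tsum_congr he, tsum_mul_right, hcdef]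
      simp only [besselJInt, if_pos hd]
      rfl
    · have hdr : (((-d).toNat : ℕ) : ℝ) = -(d : ℝ) := by
        have h1 : (((-d).toNat : ℤ)) = -d := Int.toNat_of_nonneg (by omega)
        exact_mod_cast congrArg (Int.cast : ℤ → ℝ) h1
      have he : ∀ m : ℕ, (g ∘ natPairEquiv) (d, m) =
          (((-1 : ℝ) ^ m / (m.factorial * (m + (-d).toNat).factorial)) *
            (a/2) ^ (2 * m + (-d).toNat)) *
            ((-1 : ℝ) ^ (-d).toNat * Real.cos ((d : ℝ) * x)) := by
        intro m
        simp only [Function.comp, natPairEquiv, Equiv.coe_fn_mk, if_neg hd, hgdef]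
        rw [show (((m : ℕ) : ℝ) - ((m + (-d).toNat : ℕ) : ℝ)) * x = (d : ℝ) * x by
          push_cast [hdr]; ring]
        ring
      rw [tsum_congr he, tsum_mul_right, hcdef]
      simp only [besselJInt, if_neg hd]
      rw [besselJ]
      ring
  have hcsum : HasSum c (Real.cos (a * Real.sin x)) := hφ.prod_fiberwise hc
  have h2 := hcsum.nat_add_neg
  have hc0 : c 0 = besselJ 0 a := by
    simp [hcdef, besselJInt]
  have hcn : ∀ n : ℕ, c (n : ℤ) = besselJ n a * Real.cos ((n : ℝ) * x) := by
    intro n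
    simp only [hcdef, besselJInt, if_pos (Int.natCast_nonneg n), Int.toNat_natCast]
    push_cast
    ring
  have hcneg : ∀ n : ℕ, c (-(n : ℤ)) = (-1 : ℝ) ^ n * (besselJ n a * Real.cos ((n : ℝ) * x)) := by
    intro n
    rcases Nat.eq_zero_or_pos n with h0 | h0
    · subst h0; simp [hcdef, besselJInt]
    · have hneg : ¬ (0:ℤ) ≤ -(n : ℤ) := by omega
      simp only [hcdef, besselJInt, if_neg hneg, neg_neg, Int.toNat_natCast]
      rw [show ((-(n:ℤ) : ℤ) : ℝ) * x = -((n : ℝ) * x) by push_cast; ring, Real.cos_neg]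
      ring
  have h2' : HasSum (fun n : ℕ => c (n : ℤ) + c (-(n : ℤ)))
      (Real.cos (a * Real.sin x) + besselJ 0 a) := by
    rwa [hc0] at h2
  have h3 : HasSum (fun n : ℕ => c ((n + 1 : ℕ) : ℤ) + c (-((n + 1 : ℕ) : ℤ)))
      (Real.cos (a * Real.sin x) - besselJ 0 a) := by
    have := (hasSum_nat_add_iff' (f := fun n : ℕ => c (n : ℤ) + c (-(n : ℤ))) 1).mpr h2'
    simp only [Finset.sum_range_one, Nat.cast_zero, neg_zero, hc0] at this
    convert this using 1
    · rfl
    · ring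
  -- restrict to the even orders: the odd terms vanish
  have hi : Function.Injective (fun k : ℕ => 2 * k + 1) := by
    intro a b h
    have h' : 2 * a + 1 = 2 * b + 1 := h
    omega
  have hzero : ∀ n : ℕ, n ∉ Set.range (fun k : ℕ => 2 * k + 1) →
      c ((n + 1 : ℕ) : ℤ) + c (-((n + 1 : ℕ) : ℤ)) = 0 := by
    intro n hn
    have hev : Even n := by
      rcases Nat.even_or_odd n with h | h
      · exact h
      · obtain ⟨k, hk⟩ := h
        exact absurd ⟨k, show 2 * k + 1 = n by omega⟩ hn
    obtain ⟨k, hk⟩ := hev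
    have hodd : Odd (n + 1) := ⟨k, by omega⟩
    rw [hcn, hcneg, Odd.neg_one_pow hodd]
    ring
  have h4 := (Function.Injective.hasSum_iff hi hzero).mpr h3
  have h5 : ∀ k : ℕ, c ((2 * k + 1 + 1 : ℕ) : ℤ) + c (-((2 * k + 1 + 1 : ℕ) : ℤ))
      = 2 * besselJ (2 * (k + 1)) a * Real.cos ((2 * (k + 1) : ℝ) * x) := by
    intro k
    rw [hcn, hcneg]
    rw [show (2 * k + 1 + 1 : ℕ) = 2 * (k + 1) by ring]
    rw [Even.neg_one_pow ⟨k + 1, by ring⟩]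
    push_cast
    ring
  convert h4 using 1
  funext k
  rw [← h5 k]
  rfl
end
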